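/- Every ccc Hausdorff space which is a continuous image of some compact linearly ordered topological space is a continuous image of some ccc compact linearly ordered topological space. -/
import Mathlib


universe u

open Set Topology

/-- The character of a space `X` at a point `x`: the least cardinality of a
neighborhood base of `X` at `x`. -/
noncomputable def nhdsChar (X : Type u) [TopologicalSpace X] (x : X) : Cardinal.{u} :=
  sInf { c | ∃ B : Set (Set X), Cardinal.mk B = c ∧ (∀ U ∈ B, U ∈ nhds x) ∧
      ∀ V ∈ nhds x, ∃ U ∈ B, U ⊆ V }

/-- The character of a space: `χ(X) = sup_{x ∈ X} χ(x, X)`. -/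
noncomputable def spaceChar (X : Type u) [TopologicalSpace X] : Cardinal.{u} :=
  ⨆ x : X, nhdsChar X x

/-- The cellularity of a space: the supremum of cardinalities of pairwise disjoint
families of nonempty open subsets. -/
noncomputable def cellularity (X : Type u) [TopologicalSpace X] : Cardinal.{u} :=
  sSup { c | ∃ 𝒰 : Set (Set X), Cardinal.mk 𝒰 = c ∧ (∀ U ∈ 𝒰, IsOpen U ∧ U.Nonempty) ∧
      𝒰.PairwiseDisjoint id }

/-- The density of a space: the least cardinality of a dense subset. -/
noncomputable def density (X : Type u) [TopologicalSpace X] : Cardinal.{u} :=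
  sInf { c | ∃ D : Set X, Cardinal.mk D = c ∧ Dense D }

/-- The weight of a space: the least cardinality of a base for the topology. -/
noncomputable def weight (X : Type u) [TopologicalSpace X] : Cardinal.{u} :=
  sInf { c | ∃ B : Set (Set X), Cardinal.mk B = c ∧ TopologicalSpace.IsTopologicalBasis B }

/-- A surjective map is irreducible if no proper closed subset maps onto the codomain. -/
def IsIrreducibleMap {K : Type*} {X : Type*} [TopologicalSpace K] [TopologicalSpace X]
    (f : K → X) : Prop :=
  Function.Surjective f ∧ ∀ A : Set K, IsClosed A → A ≠ univ → f '' A ≠ univ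

/-- `C` is an order component of `A`: a maximal convex subset of `A`. -/
def IsOrderComponent {K : Type*} [LinearOrder K] (A C : Set K) : Prop :=
  C ⊆ A ∧ C.OrdConnected ∧ ∀ C' : Set K, C ⊆ C' → C' ⊆ A → C'.OrdConnected → C' = C

/-- A map from a linearly ordered set is order-light if every order component of every
fiber is a singleton. -/
def OrderLight {K : Type*} {X : Type*} [LinearOrder K] (f : K → X) : Prop :=
  ∀ x : X, ∀ C : Set K, IsOrderComponent (f ⁻¹' {x}) C → ∃ k, C = {k}

/-- The countable chain condition: every pairwise disjoint family of nonempty open sets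
is countable. -/
def CCC (X : Type*) [TopologicalSpace X] : Prop :=
  ∀ 𝒰 : Set (Set X), (∀ U ∈ 𝒰, IsOpen U ∧ U.Nonempty) → 𝒰.PairwiseDisjoint id → 𝒰.Countable

/-- A space is non-archimedean if it has a base any two members of which are either
disjoint or comparable by inclusion. -/
def NonArchimedean (X : Type*) [TopologicalSpace X] : Prop :=
  ∃ B : Set (Set X), TopologicalSpace.IsTopologicalBasis B ∧
    ∀ U ∈ B, ∀ V ∈ B, Disjoint U V ∨ U ⊆ V ∨ V ⊆ U

/-- A space is perfectly normal if it is normal and every closed set is a Gδ-set. -/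
def PerfNormal (X : Type*) [TopologicalSpace X] : Prop :=
  NormalSpace X ∧ ∀ A : Set X, IsClosed A → IsGδ A

/-- `X` is a continuous image of some compact linearly ordered topological space
(a linearly ordered set equipped with its order topology). -/
def ContinuousImageOfCompactLOTS (X : Type u) [TopologicalSpace X] : Prop :=
  ∃ (K : Type u) (lo : LinearOrder K) (tK : TopologicalSpace K),
    letI := lo; letI := tK;
    OrderTopology K ∧ CompactSpace K ∧ ∃ f : K → X, Continuous f ∧ Function.Surjective f

/-- A closed set `A` is a strong T-set: the boundary of each connected component of the
complement consists of exactly two points, and each such component is homeomorphic to the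
open unit interval `(0,1)`. -/
def IsStrongTSet {Y : Type*} [TopologicalSpace Y] (A : Set Y) : Prop :=
  IsClosed A ∧ ∀ x ∈ Aᶜ,
    (∃ a b : Y, a ≠ b ∧ frontier (connectedComponentIn Aᶜ x) = {a, b}) ∧
    Nonempty (↥(connectedComponentIn Aᶜ x) ≃ₜ ↥(Ioo (0:ℝ) 1))

/-- Souslin's Hypothesis: every ccc LOTS is separable. -/
def SouslinHypothesis : Prop :=
  ∀ (L : Type u) (lo : LinearOrder L) (tL : TopologicalSpace L),
    letI := lo; letI := tL;
    OrderTopology L → CCC L → TopologicalSpace.SeparableSpace L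


lemma aux_orderTopology_subtype {K : Type*} [LinearOrder K] [TopologicalSpace K]
    [OrderTopology K] (A : Set K) (hA : IsCompact A) :
    OrderTopology ↥A := by
  haveI hcs : CompactSpace ↥A := isCompact_iff_compactSpace.mp hA
  have hle : (instTopologicalSpaceSubtype : TopologicalSpace ↥A) ≤ Preorder.topology ↥A :=
    induced_topology_le_preorder (f := ((↑) : ↥A → K)) (fun {x y} => Subtype.coe_lt_coe)
  letI t0 : TopologicalSpace ↥A := Preorder.topology ↥A
  haveI ht0 : @OrderTopology ↥A t0 _ := ⟨rfl⟩
  haveI hT2 : @T2Space ↥A t0 :=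
    @OrderClosedTopology.to_t2Space ↥A t0 _ (@OrderTopology.to_orderClosedTopology ↥A t0 _ ht0)
  have heq : (instTopologicalSpaceSubtype : TopologicalSpace ↥A) = t0 := by
    refine le_antisymm hle ?_
    rw [TopologicalSpace.le_def]
    intro s hs
    have hcl : @IsClosed ↥A instTopologicalSpaceSubtype sᶜ :=
      @isOpen_compl_iff ↥A _ instTopologicalSpaceSubtype |>.mp (by simpa using hs)
    have hcpt : @IsCompact ↥A instTopologicalSpaceSubtype sᶜ :=
      @IsClosed.isCompact ↥A instTopologicalSpaceSubtype sᶜ hcs hcl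
    have hcpt0 : @IsCompact ↥A t0 sᶜ := by
      have := @IsCompact.image ↥A ↥A instTopologicalSpaceSubtype t0 _ id hcpt
        (continuous_id_of_le hle)
      simpa using this
    have : @IsClosed ↥A t0 sᶜ := @IsCompact.isClosed ↥A t0 _ _ hcpt0
    have := @isClosed_compl_iff ↥A t0 s |>.mp this
    exact this
  exact @OrderTopology.mk ↥A instTopologicalSpaceSubtype _ heq

theorem image_of_ccc_compact_LOTS (X : Type u) [TopologicalSpace X] [T2Space X]
    (hccc : CCC X) (hX : ContinuousImageOfCompactLOTS X) :
    ∃ (K : Type u) (lo : LinearOrder K) (tK : TopologicalSpace K),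
      letI := lo; letI := tK;
      OrderTopology K ∧ CompactSpace K ∧ CCC K ∧
        ∃ f : K → X, Continuous f ∧ Function.Surjective f := by
  obtain ⟨K, lo, tK, hOT, hcpt, f, hf, hsurj⟩ := hX
  haveI := hOT; haveI := hcpt
  set S : Set (Set K) := {A | IsClosed A ∧ f '' A = univ} with hS
  obtain ⟨A, -, hAmin⟩ : ∃ A, A ⊆ univ ∧ Minimal (· ∈ S) A := by
    refine zorn_superset_nonempty S ?_ univ ⟨isClosed_univ, by simpa using hsurj.range_eq⟩
    rintro c hcS hchain ⟨A0, hA0⟩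
    refine ⟨⋂₀ c, ⟨isClosed_sInter fun B hB => (hcS hB).1, ?_⟩,
      fun s hs => sInter_subset_of_mem hs⟩
    refine eq_univ_of_forall fun x => ?_
    haveI : Nonempty c := ⟨⟨A0, hA0⟩⟩
    have hne : (⋂ B : c, (B : Set K) ∩ f ⁻¹' {x}).Nonempty := by
      apply IsCompact.nonempty_iInter_of_directed_nonempty_isCompact_isClosed
      · intro B C
        rcases hchain.total B.2 C.2 with h | h
        · exact ⟨B, Subset.rfl, inter_subset_inter_left _ h⟩
        · exact ⟨C, inter_subset_inter_left _ h, Subset.rfl⟩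
      · intro B
        have : x ∈ f '' (B : Set K) := (hcS B.2).2 ▸ mem_univ x
        obtain ⟨k, hk, hkx⟩ := this
        exact ⟨k, hk, by simpa using hkx⟩
      · intro B
        exact (((hcS B.2).1.inter (isClosed_singleton.preimage hf))).isCompact
      · intro B
        exact (hcS B.2).1.inter (isClosed_singleton.preimage hf)
    obtain ⟨k, hk⟩ := hne
    simp only [mem_iInter, mem_inter_iff, mem_preimage, mem_singleton_iff] at hk
    exact ⟨k, fun B hB => (hk ⟨B, hB⟩).1, (hk ⟨A0, hA0⟩).2⟩
  obtain ⟨hAclosed, hAonto⟩ := hAmin.prop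
  have hAcpt : IsCompact A := hAclosed.isCompact
  haveI hcsA : CompactSpace ↥A := isCompact_iff_compactSpace.mp hAcpt
  haveI hOTA : OrderTopology ↥A := aux_orderTopology_subtype A hAcpt
  set g : ↥A → X := f ∘ Subtype.val with hg
  have hgc : Continuous g := hf.comp continuous_subtype_val
  have hgs : Function.Surjective g := by
    intro x
    have : x ∈ f '' A := hAonto ▸ mem_univ x
    obtain ⟨k, hk, hkx⟩ := this
    exact ⟨⟨k, hk⟩, hkx⟩
  have hmin : ∀ B : Set ↥A, IsClosed B → B ≠ univ → f '' (Subtype.val '' B) ≠ univ := by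
    intro B hB hBne honto
    have hBclK : IsClosed (Subtype.val '' B) := hAclosed.isClosedMap_subtype_val B hB
    have hsub : Subtype.val '' B ⊆ A := by
      rintro k ⟨a, -, rfl⟩; exact a.2
    have hle : A ⊆ Subtype.val '' B := hAmin.2 ⟨hBclK, honto⟩ hsub
    apply hBne
    refine eq_univ_of_forall fun a => ?_
    obtain ⟨b, hb, hba⟩ := hle a.2
    exact (Subtype.ext hba : b = a) ▸ hb
  have hcccA : CCC ↥A := by
    intro 𝒰 h1 h2
    set V : Set ↥A → Set X := fun U => (f '' (Subtype.val '' Uᶜ))ᶜ with hV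
    have hVopen : ∀ U ∈ 𝒰, IsOpen (V U) := by
      intro U hU
      have hc : IsClosed (Subtype.val '' Uᶜ) :=
        hAclosed.isClosedMap_subtype_val _ (h1 U hU).1.isClosed_compl
      exact ((hc.isCompact.image hf).isClosed).isOpen_compl
    have hVsub : ∀ U, g ⁻¹' (V U) ⊆ U := by
      intro U a ha
      by_contra h
      exact ha (mem_image_of_mem f (mem_image_of_mem _ h))
    have hVne : ∀ U ∈ 𝒰, (V U).Nonempty := by
      intro U hU
      rw [nonempty_iff_ne_empty]
      intro h
      have honto : f '' (Subtype.val '' Uᶜ) = univ := by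
        have := congrArg compl h
        simpa [hV] using this
      refine hmin Uᶜ (h1 U hU).1.isClosed_compl ?_ honto
      obtain ⟨a, haU⟩ := (h1 U hU).2
      intro he
      exact (he ▸ mem_univ a : a ∈ Uᶜ) haU
    have hVdisj : ∀ U₁ ∈ 𝒰, ∀ U₂ ∈ 𝒰, U₁ ≠ U₂ → Disjoint (V U₁) (V U₂) := by
      intro U₁ hU₁ U₂ hU₂ hne
      rw [Set.disjoint_left]
      intro x hx1 hx2
      obtain ⟨a, rfl⟩ := hgs x
      exact Set.disjoint_left.mp (h2 hU₁ hU₂ hne) (hVsub U₁ hx1) (hVsub U₂ hx2)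
    have hinj : InjOn V 𝒰 := by
      intro U₁ hU₁ U₂ hU₂ he
      by_contra hne
      have hd := hVdisj U₁ hU₁ U₂ hU₂ hne
      rw [he] at hd
      obtain ⟨x, hx⟩ := hVne U₂ hU₂
      exact Set.disjoint_left.mp hd hx hx
    have hcount : (V '' 𝒰).Countable := by
      refine hccc (V '' 𝒰) ?_ ?_
      · rintro W ⟨U, hU, rfl⟩
        exact ⟨hVopen U hU, hVne U hU⟩
      · rintro W₁ ⟨U₁, hU₁, rfl⟩ W₂ ⟨U₂, hU₂, rfl⟩ hne
        have : U₁ ≠ U₂ := fun h => hne (by rw [h])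
        exact hVdisj U₁ hU₁ U₂ hU₂ this
    rw [← Set.countable_coe_iff] at hcount ⊢
    haveI := hcount
    exact Function.Injective.countable
      (f := fun U : ↥𝒰 => (⟨V U, mem_image_of_mem V U.2⟩ : ↥(V '' 𝒰)))
      fun U₁ U₂ h => Subtype.ext (hinj U₁.2 U₂.2 (congrArg Subtype.val h))
  exact ⟨↥A, inferInstance, inferInstance, hOTA, hcsA, hcccA, g, hgc, hgs⟩
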